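/- arXiv:2101.08619 — 2 statements merged into one kernel-verified Lean document; each statement's English description precedes it below -/
import Mathlib

section
/- Let k ≥ 2 and let (C_{2k},σ) be a signed even cycle on vertices v_1, v_2, …, v_{2k} (in cyclic order), and let L be a list assignment such that L(v_i) is a neighbored 5-set for every even i and a paired set of size 10 for every odd i. Then (C_{2k},σ) admits an L-coloring. -/
open SimpleGraph

/-- The color set `C`: the vertex set of `DSG(K_6, M)`, encoding `x^+` as `(x, 1)` and `x^−`
as `(x, -1)` for `x` a vertex of `K_6`. -/
abbrev ColorC : Type := Fin 6 × ℤˣ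

/-- The perfect matching on the vertices of `K_6`: `0↔1, 2↔3, 4↔5` (i.e. `12, 34, 56`). -/
def pairFn : Fin 6 → Fin 6 := ![1, 0, 3, 2, 5, 4]

/-- The pair of a color: the matched `K_6`-vertex on the same side. -/
def pairC (c : ColorC) : ColorC := (pairFn c.1, c.2)

/-- Two colors lie in the same layer iff their `K_6`-vertices lie in the same matched pair. -/
def SameLayer (c d : ColorC) : Prop := (c.1 : ℕ) / 2 = (d.1 : ℕ) / 2

/-- The underlying graph of `DSG(K_6, M)`: `(x, s)` is adjacent to `(y, t)` iff `x ≠ y`. -/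
def DSG6 : SimpleGraph ColorC where
  Adj a b := a.1 ≠ b.1
  symm := ⟨fun _ _ h => Ne.symm h⟩
  loopless := ⟨fun _ h => h rfl⟩

/-- The sign of the `DSG(K_6, M)`-edge between colors `c` and `d`: it is
`c.2 * d.2 * π(c.1 d.1)` where `π` is the signature of `(K_6, M)` (negative exactly on the
matching `12, 34, 56`). -/
def dsgSign (c d : ColorC) : ℤˣ :=
  c.2 * d.2 * (if (c.1 : ℕ) / 2 = (d.1 : ℕ) / 2 then -1 else 1)

/-- A set of colors is paired if for all but at most one of its elements, the pair of the
element also lies in the set. -/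
def IsPaired (L : Set ColorC) : Prop := {c | c ∈ L ∧ pairC c ∉ L}.Subsingleton

/-- A set of colors is layered if it is paired and no three of its colors lie in a common
layer. -/
def IsLayered (L : Set ColorC) : Prop :=
  IsPaired L ∧ ∀ j : ℕ, {c | c ∈ L ∧ (c.1 : ℕ) / 2 = j}.ncard ≤ 2

/-- A set of colors is one-sided if all its colors lie on the same side. -/
def IsOneSided (L : Set ColorC) : Prop :=
  (∀ c ∈ L, c.2 = 1) ∨ (∀ c ∈ L, c.2 = -1)

/-- A neighbored `(2k+1)`-set: a layered set of size `2k+1` consisting of `k` pairs all on one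
side together with a single color on the other side. -/
def IsNeighbored (k : ℕ) (L : Set ColorC) : Prop :=
  IsLayered L ∧ L.ncard = 2 * k + 1 ∧
    ∃ α : ℤˣ, ∃ c ∈ L, c.2 = -α ∧ ∀ d ∈ L, d ≠ c → d.2 = α ∧ pairC d ∈ L

/-- An `L`-coloring of a signed graph `(G, σ)` with list assignment `L`: an edge-sign
preserving homomorphism `φ` of `(G, σ)` to `DSG(K_6, M)` with `φ v ∈ L v` for all `v`. -/
def IsLColoring {V : Type*} (G : SimpleGraph V) (σ : Sym2 V → ℤˣ)
    (L : V → Set ColorC) (φ : V → ColorC) : Prop :=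
  (∀ v, φ v ∈ L v) ∧
  ∀ u v : V, G.Adj u v → (φ u).1 ≠ (φ v).1 ∧ dsgSign (φ u) (φ v) = σ s(u, v)

def layer3 (c : ColorC) : Fin 3 := ⟨(c.1 : ℕ) / 2, by have := c.1.isLt; omega⟩
def BadL (J : Fin 3) (T A B : ℤˣ) (x y : Fin 3 × ℤˣ) : Prop :=
  (x.1 = y.1 ∧ A * x.2 ≠ B * y.2) ∨
  (x.1 ≠ y.1 ∧ x.1 ≠ J ∧ y.1 ≠ J ∧ A * x.2 = T ∧ B * y.2 = T)
instance (J : Fin 3) (T A B : ℤˣ) (x y : Fin 3 × ℤˣ) : Decidable (BadL J T A B x y) := by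
  unfold BadL; infer_instance

lemma pairC_invol : ∀ c : ColorC, pairC (pairC c) = c := by decide
lemma pairC_ne : ∀ c : ColorC, pairC c ≠ c := by decide
lemma dsgSign_comm : ∀ c d : ColorC, dsgSign c d = dsgSign d c := by decide
lemma units_eq_neg_of_ne : ∀ a b : ℤˣ, a ≠ b → a = -b := by decide
lemma units_eq_of_ne_neg : ∀ a b : ℤˣ, a ≠ -b → a = b := by decide

lemma fact1 : ∀ (J : Fin 3) (T A B an : ℤˣ) (x : Fin 3 × ℤˣ) (l1 l2 : Fin 3), l1 ≠ l2 →
    ¬BadL J T A B x (l1, an) ∨ ¬BadL J T A B x (l2, an) := by decide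
lemma fact2 : ∀ (J : Fin 3) (T A B ap : ℤˣ) (y : Fin 3 × ℤˣ) (l1 l2 : Fin 3), l1 ≠ l2 →
    ¬BadL J T A B (l1, ap) y ∨ ¬BadL J T A B (l2, ap) y := by decide
lemma factD_fwd : ∀ (J : Fin 3) (T A B a an : ℤˣ) (z l : Fin 3),
    A * a = -(B * an) → T = -(A * a) → ¬ BadL J T A B (l, a) (z, -an) := by decide
lemma factD_bwd : ∀ (J : Fin 3) (T A B a an : ℤˣ) (z l : Fin 3),
    A * a = -(B * an) → T = A * a → ¬ BadL J T A B (z, -a) (l, an) := by decide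
set_option synthInstance.maxSize 2000 in
set_option synthInstance.maxHeartbeats 1000000 in
lemma fact2b : ∀ (J : Fin 3) (T A B a an : ℤˣ) (l1 l2 l1' l2' : Fin 3), l1 ≠ l2 → l1' ≠ l2' →
    A * a = B * an →
    (BadL J T A B (l1, a) (l1', an) ∨ BadL J T A B (l1, a) (l2', an)) →
    (BadL J T A B (l2, a) (l1', an) ∨ BadL J T A B (l2, a) (l2', an)) →
    ((l1' = l1 ∧ l2' = l2) ∨ (l1' = l2 ∧ l2' = l1)) ∧
      (∀ m : Fin 3, ¬BadL J T A B (m, a) (m, an)) := by decide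

set_option maxHeartbeats 4000000 in
lemma middle_exists : ∀ (p c e : ColorC) (s1 s2 : ℤˣ),
    ¬ BadL (layer3 p) p.2 s1 s2 (layer3 c, c.2) (layer3 e, e.2) →
    ∃ f : ColorC, f ≠ p ∧ f ≠ pairC p ∧ f.1 ≠ c.1 ∧ f.1 ≠ e.1 ∧
      dsgSign c f = s1 ∧ dsgSign f e = s2 := by decide

lemma card12 : Nat.card ColorC = 12 := by
  rw [Nat.card_eq_fintype_card]; decide

lemma tenSet (L : Set ColorC) (hp : IsPaired L) (hc : L.ncard = 10) :
    ∃ p : ColorC, ∀ f, f ∈ L ↔ f ≠ p ∧ f ≠ pairC p := by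
  have hcompl : (Lᶜ).ncard = 2 := by
    have h := Set.ncard_add_ncard_compl L
    rw [card12, hc] at h; omega
  obtain ⟨p, q, hpq, hLc⟩ := Set.ncard_eq_two.mp hcompl
  have hmemc : ∀ f : ColorC, f ∈ Lᶜ ↔ f = p ∨ f = q := by
    intro f; rw [hLc]; simp
  have hq : q = pairC p := by
    by_contra hne
    have hp1 : pairC p ∈ L := by
      by_contra h
      rcases (hmemc _).mp h with h' | h'
      · exact pairC_ne p h'
      · exact hne h'.symm
    have hq1 : pairC q ∈ L := by
      by_contra h
      rcases (hmemc _).mp h with h' | h'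
      · exact hne (by rw [← h', pairC_invol])
      · exact pairC_ne q h'
    have e1 : pairC p ∈ {c | c ∈ L ∧ pairC c ∉ L} := by
      refine ⟨hp1, ?_⟩
      rw [pairC_invol]
      intro hmem
      exact ((hmemc p).mpr (Or.inl rfl)) hmem
    have e2 : pairC q ∈ {c | c ∈ L ∧ pairC c ∉ L} := by
      refine ⟨hq1, ?_⟩
      rw [pairC_invol]
      intro hmem
      exact ((hmemc q).mpr (Or.inr rfl)) hmem
    have := hp e1 e2
    apply hpq
    rw [← pairC_invol p, this, pairC_invol]
  refine ⟨p, fun f => ?_⟩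
  constructor
  · intro hf
    constructor
    · rintro rfl; exact ((hmemc f).mpr (Or.inl rfl)) hf
    · rintro rfl; exact ((hmemc _).mpr (Or.inr hq.symm)) hf
  · rintro ⟨h1, h2⟩
    by_contra h
    rcases (hmemc _).mp h with h' | h'
    · exact h1 h'
    · exact h2 (by rw [h', hq])

lemma fiveSet (L : Set ColorC) (h : IsNeighbored 2 L) :
    ∃ (α : ℤˣ) (cS cA cB : ColorC), cS ∈ L ∧ cA ∈ L ∧ cB ∈ L ∧
      cS.2 = -α ∧ cA.2 = α ∧ cB.2 = α ∧ layer3 cA ≠ layer3 cB := by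
  obtain ⟨⟨hpair, hlay⟩, hcard, α, c, hc, hc2, hrest⟩ := h
  have hD : (L \ {c}).ncard = 4 := by
    rw [Set.ncard_diff_singleton_of_mem hc, hcard]
  have hne : (L \ {c}).Nonempty := by
    rw [← Set.ncard_pos (Set.toFinite _)]; omega
  obtain ⟨d1, hd1⟩ := hne
  by_cases hall : ∀ d ∈ L \ {c}, layer3 d = layer3 d1
  · exfalso
    have hsub : L \ {c} ⊆ {x | x ∈ L ∧ (x.1 : ℕ) / 2 = (d1.1 : ℕ) / 2} := by
      intro x hx
      refine ⟨hx.1, ?_⟩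
      have := hall x hx
      exact congrArg Fin.val this
    have := Set.ncard_le_ncard hsub (Set.toFinite _)
    have h2 := hlay ((d1.1 : ℕ) / 2)
    omega
  · push_neg at hall
    obtain ⟨d2, hd2, hne2⟩ := hall
    refine ⟨α, c, d2, d1, hc, hd2.1, hd1.1, hc2, ?_, ?_, hne2⟩
    · exact (hrest d2 hd2.1 hd2.2).1
    · exact (hrest d1 hd1.1 hd1.2).1


section Skeleton
variable {k : ℕ} [NeZero k] {γ : Type*}

lemma natCast_k_sub_one (hk : 2 ≤ k) : ((k - 1 : ℕ) : ZMod k) = -1 := by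
  have hk1 : (k - 1 : ℕ) + 1 = k := by omega
  have h0 : ((k : ℕ) : ZMod k) = 0 := ZMod.natCast_self k
  have h2 : (((k - 1) + 1 : ℕ) : ZMod k) = ((k - 1 : ℕ) : ZMod k) + 1 := by
    rw [Nat.cast_add, Nat.cast_one]
  rw [hk1, h0] at h2
  linear_combination -h2

lemma skeleton_fwd (hk : 2 ≤ k) (P Main : ZMod k → γ → Prop)
    (Bd : ZMod k → γ → γ → Prop)
    (exNext : ∀ (m : ZMod k) (x : γ), ∃ y, Main (m + 1) y ∧ ¬ Bd m x y)
    (hMP : ∀ i x, Main i x → P i x)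
    (i0 : ZMod k) (v0 : γ) (hv0 : P i0 v0)
    (hcl : ∀ x, Main (i0 - 1) x → ¬ Bd (i0 - 1) x v0) :
    ∃ x : ZMod k → γ, (∀ i, P i (x i)) ∧ ∀ i, ¬ Bd i (x i) (x (i + 1)) := by
  classical
  let g : ℕ → γ := fun t => Nat.rec v0 (fun t xt => (exNext (i0 + t) xt).choose) t
  have hg0 : g 0 = v0 := rfl
  have hgMain : ∀ t : ℕ, Main (i0 + t + 1) (g (t + 1)) :=
    fun t => (exNext (i0 + t) (g t)).choose_spec.1
  have hgBad : ∀ t : ℕ, ¬ Bd (i0 + t) (g t) (g (t + 1)) :=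
    fun t => (exNext (i0 + t) (g t)).choose_spec.2
  have hcastv : ∀ i : ZMod k, (((i - i0).val : ℕ) : ZMod k) = i - i0 :=
    fun i => ZMod.natCast_rightInverse _
  refine ⟨fun i => g ((i - i0).val), ?_, ?_⟩
  · intro i
    show P i (g ((i - i0).val))
    rcases Nat.eq_zero_or_pos ((i - i0).val) with h0' | hpos
    · have hi : i = i0 := by
        have h1 : i - i0 = 0 := by rw [← hcastv i, h0']; simp
        linear_combination h1
      rw [h0', hg0, hi]; exact hv0
    · obtain ⟨s, hs⟩ : ∃ s, (i - i0).val = s + 1 := ⟨(i - i0).val - 1, by omega⟩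
      have hM := hgMain s
      have hidx : i0 + (s : ZMod k) + 1 = i := by
        have h2 : ((s : ℕ) : ZMod k) + 1 = i - i0 := by
          rw [← hcastv i, hs]; push_cast; ring
        rw [add_assoc, h2]; ring
      rw [hidx] at hM
      rw [hs]
      exact hMP _ _ hM
  · intro i
    show ¬ Bd i (g ((i - i0).val)) (g (((i + 1) - i0).val))
    have htk : (i - i0).val < k := ZMod.val_lt _
    have hcast : (((i - i0).val : ℕ) : ZMod k) = i - i0 := hcastv i
    by_cases hlt : (i - i0).val + 1 < k
    · have hi : i0 + (((i - i0).val : ℕ) : ZMod k) = i := by rw [hcast]; ring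
      have hval : ((i + 1) - i0).val = (i - i0).val + 1 := by
        have h2 : (i + 1) - i0 = ((((i - i0).val + 1 : ℕ)) : ZMod k) := by
          push_cast; rw [hcast]; ring
        rw [h2, ZMod.val_cast_of_lt hlt]
      rw [hval]
      have := hgBad ((i - i0).val)
      rwa [hi] at this
    · have htk1 : (i - i0).val = k - 1 := by omega
      have hi : i = i0 - 1 := by
        have h1 : i - i0 = -1 := by rw [← hcast, htk1, natCast_k_sub_one hk]
        linear_combination h1
      have hi1 : i + 1 = i0 := by rw [hi]; ring
      have hval0 : ((i + 1) - i0).val = 0 := by rw [hi1]; simp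
      rw [hval0, hg0, htk1]
      have hM := hgMain (k - 2)
      have hseq : (k - 2) + 1 = k - 1 := by omega
      have hMid : i0 + ((k - 2 : ℕ) : ZMod k) + 1 = i0 - 1 := by
        have e : (k - 2) + 1 = k - 1 := by omega
        have h3 : ((k - 2 : ℕ) : ZMod k) + 1 = ((k - 1 : ℕ) : ZMod k) := by
          rw [← e, Nat.cast_add, Nat.cast_one]
        rw [add_assoc, h3, natCast_k_sub_one hk]; ring
      rw [hMid, hseq] at hM
      rw [hi]
      exact hcl _ hM

lemma skeleton_bwd (hk : 2 ≤ k) (P Main : ZMod k → γ → Prop)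
    (Bd : ZMod k → γ → γ → Prop)
    (exPred : ∀ (m : ZMod k) (y : γ), ∃ x, Main m x ∧ ¬ Bd m x y)
    (hMP : ∀ i x, Main i x → P i x)
    (i0 : ZMod k) (v0 : γ) (hv0 : P i0 v0)
    (hcl : ∀ y, Main (i0 + 1) y → ¬ Bd i0 v0 y) :
    ∃ x : ZMod k → γ, (∀ i, P i (x i)) ∧ ∀ i, ¬ Bd i (x i) (x (i + 1)) := by
  classical
  let g : ℕ → γ := fun t => Nat.rec v0 (fun t xt => (exPred (i0 - t - 1) xt).choose) t
  have hg0 : g 0 = v0 := rfl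
  have hgMain : ∀ t : ℕ, Main (i0 - t - 1) (g (t + 1)) :=
    fun t => (exPred (i0 - t - 1) (g t)).choose_spec.1
  have hgBad : ∀ t : ℕ, ¬ Bd (i0 - t - 1) (g (t + 1)) (g t) :=
    fun t => (exPred (i0 - t - 1) (g t)).choose_spec.2
  have hcastv : ∀ i : ZMod k, (((i0 - i).val : ℕ) : ZMod k) = i0 - i :=
    fun i => ZMod.natCast_rightInverse _
  refine ⟨fun i => g ((i0 - i).val), ?_, ?_⟩
  · intro i
    show P i (g ((i0 - i).val))
    rcases Nat.eq_zero_or_pos ((i0 - i).val) with h0' | hpos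
    · have hi : i = i0 := by
        have h1 : i0 - i = 0 := by rw [← hcastv i, h0']; simp
        linear_combination -h1
      rw [h0', hg0, hi]; exact hv0
    · obtain ⟨s, hs⟩ : ∃ s, (i0 - i).val = s + 1 := ⟨(i0 - i).val - 1, by omega⟩
      have hM := hgMain s
      have hidx : i0 - (s : ZMod k) - 1 = i := by
        have h2 : ((s : ℕ) : ZMod k) + 1 = i0 - i := by
          rw [← hcastv i, hs]; push_cast; ring
        linear_combination -h2
      rw [hidx] at hM
      rw [hs]
      exact hMP _ _ hM
  · intro i
    show ¬ Bd i (g ((i0 - i).val)) (g ((i0 - (i + 1)).val))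
    have htk : (i0 - (i + 1)).val < k := ZMod.val_lt _
    have hcast : (((i0 - (i + 1)).val : ℕ) : ZMod k) = i0 - (i + 1) := hcastv (i + 1)
    by_cases hlt : (i0 - (i + 1)).val + 1 < k
    · have hval : (i0 - i).val = (i0 - (i + 1)).val + 1 := by
        have h2 : i0 - i = ((((i0 - (i + 1)).val + 1 : ℕ)) : ZMod k) := by
          push_cast; rw [hcast]; ring
        rw [h2, ZMod.val_cast_of_lt hlt]
      have hmid : i0 - (((i0 - (i + 1)).val : ℕ) : ZMod k) - 1 = i := by
        rw [hcast]; ring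
      have := hgBad ((i0 - (i + 1)).val)
      rw [hmid] at this
      rw [hval]
      exact this
    · have htk1 : (i0 - (i + 1)).val = k - 1 := by omega
      have hi : i = i0 := by
        have h1 : i0 - (i + 1) = -1 := by rw [← hcast, htk1, natCast_k_sub_one hk]
        linear_combination -h1
      have hval0 : (i0 - i).val = 0 := by rw [hi]; simp
      rw [hval0, hg0, htk1, hi]
      have hM := hgMain (k - 2)
      have hseq : (k - 2) + 1 = k - 1 := by omega
      have hMid : i0 - ((k - 2 : ℕ) : ZMod k) - 1 = i0 + 1 := by
        have e : (k - 2) + 1 = k - 1 := by omega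
        have h3 : ((k - 2 : ℕ) : ZMod k) + 1 = ((k - 1 : ℕ) : ZMod k) := by
          rw [← e, Nat.cast_add, Nat.cast_one]
        have h5 := natCast_k_sub_one (k := k) hk
        linear_combination -h3 - h5
      rw [hMid, hseq] at hM
      exact hcl _ hM

end Skeleton

lemma csp (k : ℕ) (hk : 2 ≤ k) (J : ZMod k → Fin 3) (T A B alf : ZMod k → ℤˣ)
    (lA lB z : ZMod k → Fin 3) (hl : ∀ i, lA i ≠ lB i) :
    ∃ x : ZMod k → Fin 3 × ℤˣ,
      (∀ i, x i = (lA i, alf i) ∨ x i = (lB i, alf i) ∨ x i = (z i, -alf i)) ∧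
      (∀ i, ¬ BadL (J i) (T i) (A i) (B i) (x i) (x (i + 1))) := by
  haveI : NeZero k := ⟨by omega⟩
  have exNext : ∀ (m : ZMod k) (x : Fin 3 × ℤˣ), ∃ y,
      (y = (lA (m+1), alf (m+1)) ∨ y = (lB (m+1), alf (m+1))) ∧
      ¬ BadL (J m) (T m) (A m) (B m) x y := by
    intro m x
    rcases fact1 (J m) (T m) (A m) (B m) (alf (m+1)) x (lA (m+1)) (lB (m+1)) (hl _) with h | h
    · exact ⟨_, Or.inl rfl, h⟩
    · exact ⟨_, Or.inr rfl, h⟩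
  have exPred : ∀ (m : ZMod k) (y : Fin 3 × ℤˣ), ∃ x,
      (x = (lA m, alf m) ∨ x = (lB m, alf m)) ∧
      ¬ BadL (J m) (T m) (A m) (B m) x y := by
    intro m y
    rcases fact2 (J m) (T m) (A m) (B m) (alf m) y (lA m) (lB m) (hl _) with h | h
    · exact ⟨_, Or.inl rfl, h⟩
    · exact ⟨_, Or.inr rfl, h⟩
  have hMP : ∀ (i : ZMod k) (x : Fin 3 × ℤˣ),
      (x = (lA i, alf i) ∨ x = (lB i, alf i)) →
      (x = (lA i, alf i) ∨ x = (lB i, alf i) ∨ x = (z i, -alf i)) :=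
    fun i x h => h.imp_right Or.inl
  by_cases hD : ∃ m, A m * alf m = -(B m * alf (m + 1))
  · obtain ⟨m, hm⟩ := hD
    by_cases hT : T m = A m * alf m
    · refine skeleton_bwd hk
        (fun i x => x = (lA i, alf i) ∨ x = (lB i, alf i) ∨ x = (z i, -alf i))
        (fun i x => x = (lA i, alf i) ∨ x = (lB i, alf i))
        (fun i x y => BadL (J i) (T i) (A i) (B i) x y)
        exPred hMP m (z m, -alf m) (Or.inr (Or.inr rfl)) ?_
      rintro y (rfl | rfl)
      · exact factD_bwd _ _ _ _ _ _ _ _ hm hT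
      · exact factD_bwd _ _ _ _ _ _ _ _ hm hT
    · have hT' : T m = -(A m * alf m) := units_eq_neg_of_ne _ _ hT
      refine skeleton_fwd hk
        (fun i x => x = (lA i, alf i) ∨ x = (lB i, alf i) ∨ x = (z i, -alf i))
        (fun i x => x = (lA i, alf i) ∨ x = (lB i, alf i))
        (fun i x y => BadL (J i) (T i) (A i) (B i) x y)
        exNext hMP (m + 1) (z (m + 1), -alf (m + 1)) (Or.inr (Or.inr rfl)) ?_
      have hm' : m + 1 - 1 = m := by ring
      rw [hm']
      rintro x (rfl | rfl)
      · exact factD_fwd _ _ _ _ _ _ _ _ hm hT'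
      · exact factD_fwd _ _ _ _ _ _ _ _ hm hT'
  · push_neg at hD
    have hE : ∀ m : ZMod k, A m * alf m = B m * alf (m + 1) :=
      fun m => units_eq_of_ne_neg _ _ (hD m)
    by_cases h2a : ∃ (m : ZMod k) (x : Fin 3 × ℤˣ),
        (x = (lA m, alf m) ∨ x = (lB m, alf m)) ∧
        ¬ BadL (J m) (T m) (A m) (B m) x (lA (m+1), alf (m+1)) ∧
        ¬ BadL (J m) (T m) (A m) (B m) x (lB (m+1), alf (m+1))
    · obtain ⟨m, xs, hxs, hna, hnb⟩ := h2a
      refine skeleton_bwd hk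
        (fun i x => x = (lA i, alf i) ∨ x = (lB i, alf i) ∨ x = (z i, -alf i))
        (fun i x => x = (lA i, alf i) ∨ x = (lB i, alf i))
        (fun i x y => BadL (J i) (T i) (A i) (B i) x y)
        exPred hMP m xs (hMP _ _ hxs) ?_
      rintro y (rfl | rfl)
      exacts [hna, hnb]
    · have hBd : ∀ m : ZMod k,
          (BadL (J m) (T m) (A m) (B m) (lA m, alf m) (lA (m+1), alf (m+1)) ∨
           BadL (J m) (T m) (A m) (B m) (lA m, alf m) (lB (m+1), alf (m+1))) ∧
          (BadL (J m) (T m) (A m) (B m) (lB m, alf m) (lA (m+1), alf (m+1)) ∨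
           BadL (J m) (T m) (A m) (B m) (lB m, alf m) (lB (m+1), alf (m+1))) := by
        intro m
        constructor
        · by_contra h
          push_neg at h
          exact h2a ⟨m, (lA m, alf m), Or.inl rfl, h.1, h.2⟩
        · by_contra h
          push_neg at h
          exact h2a ⟨m, (lB m, alf m), Or.inr rfl, h.1, h.2⟩
      have hstep : ∀ m : ZMod k,
          ((lA (m+1) = lA m ∧ lB (m+1) = lB m) ∨ (lA (m+1) = lB m ∧ lB (m+1) = lA m)) ∧
          (∀ μ : Fin 3, ¬ BadL (J m) (T m) (A m) (B m) (μ, alf m) (μ, alf (m+1))) :=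
        fun m => fact2b (J m) (T m) (A m) (B m) (alf m) (alf (m+1)) (lA m) (lB m)
          (lA (m+1)) (lB (m+1)) (hl m) (hl (m+1)) (hE m) (hBd m).1 (hBd m).2
      have hconst : ∀ t : ℕ,
          (lA ((t : ℕ) : ZMod k) = lA 0 ∧ lB ((t : ℕ) : ZMod k) = lB 0) ∨
          (lA ((t : ℕ) : ZMod k) = lB 0 ∧ lB ((t : ℕ) : ZMod k) = lA 0) := by
        intro t
        induction t with
        | zero => left; simp
        | succ s ih =>
          have h := (hstep ((s : ℕ) : ZMod k)).1
          have hcast : ((s + 1 : ℕ) : ZMod k) = ((s : ℕ) : ZMod k) + 1 := by push_cast; ring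
          rw [hcast]
          rcases h with ⟨h1, h2⟩ | ⟨h1, h2⟩ <;> rcases ih with ⟨i1, i2⟩ | ⟨i1, i2⟩ <;>
            simp [h1, h2, i1, i2]
      refine ⟨fun i => (lA 0, alf i), ?_, ?_⟩
      · intro i
        have h := hconst i.val
        rw [ZMod.natCast_rightInverse i] at h
        rcases h with ⟨h1, _⟩ | ⟨_, h2⟩
        · left; rw [← h1]
        · right; left; rw [← h2]
      · intro i
        exact (hstep i).2 (lA 0)

/-- Lemma 4.9(1): a signed even cycle `v_1 v_2 ⋯ v_{2k}` (here `v_i` is the vertex `i - 1` of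
`cycleGraph (2k)`) whose list assignment gives a neighbored 5-set to each `v_i` with `i` even
and a paired 10-set to each `v_i` with `i` odd is `L`-colorable. -/
theorem evenCycle_LColorable (k : ℕ) (hk : 2 ≤ k) (σ : Sym2 (Fin (2 * k)) → ℤˣ)
    (L : Fin (2 * k) → Set ColorC)
    (hL : ∀ i : Fin (2 * k),
      ((i : ℕ) % 2 = 1 → IsNeighbored 2 (L i)) ∧
      ((i : ℕ) % 2 = 0 → IsPaired (L i) ∧ (L i).ncard = 10)) :
    ∃ φ, IsLColoring (cycleGraph (2 * k)) σ L φ := by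
  classical
  haveI : NeZero k := ⟨by omega⟩
  haveI : NeZero (2 * k) := ⟨by omega⟩
  have hk2 : 0 < 2 * k := by omega
  have hone : ((1 : Fin (2 * k)) : ℕ) = 1 := by
    rw [Fin.val_one']
    exact Nat.mod_eq_of_lt (by omega)
  have hadj : ∀ u v : Fin (2 * k), (cycleGraph (2 * k)).Adj u v ↔ u - v = 1 ∨ v - u = 1 := by
    intro u v
    rw [SimpleGraph.cycleGraph_adj']
    rw [Fin.ext_iff, Fin.ext_iff, hone]
  let uS : ZMod k → Fin (2 * k) := fun i => ⟨2 * i.val + 1, by have := ZMod.val_lt i; omega⟩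
  let uM : ZMod k → Fin (2 * k) := fun i => ⟨(2 * i.val + 2) % (2 * k), Nat.mod_lt _ hk2⟩
  have huSval : ∀ i : ZMod k, (uS i).val = 2 * i.val + 1 := fun i => rfl
  have huMval : ∀ i : ZMod k, (uM i).val = (2 * i.val + 2) % (2 * k) := fun i => rfl
  have huSodd : ∀ i, ((uS i) : ℕ) % 2 = 1 := by intro i; rw [huSval]; omega
  have huMeven : ∀ i, ((uM i) : ℕ) % 2 = 0 := by
    intro i
    rw [huMval, Nat.mod_mod_of_dvd _ ⟨k, rfl⟩]
    omega
  have h5 : ∀ i : ZMod k, IsNeighbored 2 (L (uS i)) := fun i => (hL (uS i)).1 (huSodd i)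
  choose alf cS cA cB hcSmem hcAmem hcBmem hcSs hcAs hcBs hlAB using fun i => fiveSet _ (h5 i)
  have h10 : ∀ i : ZMod k, IsPaired (L (uM i)) ∧ (L (uM i)).ncard = 10 :=
    fun i => (hL (uM i)).2 (huMeven i)
  choose p hp using fun i : ZMod k => tenSet _ (h10 i).1 (h10 i).2
  set A : ZMod k → ℤˣ := fun i => σ s(uS i, uM i) with hA
  set B : ZMod k → ℤˣ := fun i => σ s(uM i, uS (i + 1)) with hB
  obtain ⟨y, hyOpt, hyGood⟩ := csp k hk (fun i => layer3 (p i)) (fun i => (p i).2) A B alf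
    (fun i => layer3 (cA i)) (fun i => layer3 (cB i)) (fun i => layer3 (cS i)) hlAB
  let xc : ZMod k → ColorC := fun i =>
    if y i = (layer3 (cA i), alf i) then cA i
    else if y i = (layer3 (cB i), alf i) then cB i else cS i
  have hxcmem : ∀ i, xc i ∈ L (uS i) := by
    intro i
    show (if _ then _ else _) ∈ _
    split_ifs
    · exact hcAmem i
    · exact hcBmem i
    · exact hcSmem i
  have hxcrep : ∀ i, (layer3 (xc i), (xc i).2) = y i := by
    intro i
    show (layer3 (if _ then _ else _), (if _ then _ else _ : ColorC).2) = y i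
    split_ifs with h1 h2
    · rw [h1, hcAs i]
    · rw [h2, hcBs i]
    · rcases hyOpt i with h | h | h
      · exact absurd h h1
      · exact absurd h h2
      · rw [h, hcSs i]
  have hmid : ∀ i : ZMod k, ∃ f : ColorC, f ≠ p i ∧ f ≠ pairC (p i) ∧ f.1 ≠ (xc i).1 ∧
      f.1 ≠ (xc (i + 1)).1 ∧ dsgSign (xc i) f = A i ∧ dsgSign f (xc (i + 1)) = B i := by
    intro i
    apply middle_exists
    rw [hxcrep i, hxcrep (i + 1)]
    exact hyGood i
  choose f hf1 hf2 hf3 hf4 hf5 hf6 using hmid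
  have hfmem : ∀ i, f i ∈ L (uM i) := fun i => (hp i (f i)).mpr ⟨hf1 i, hf2 i⟩
  let φ : Fin (2 * k) → ColorC := fun v =>
    if (v : ℕ) % 2 = 1 then xc (((v : ℕ) / 2 : ℕ) : ZMod k)
    else f ((((v : ℕ) / 2 + (k - 1)) : ℕ) : ZMod k)
  have hvodd : ∀ v : Fin (2 * k), (v : ℕ) % 2 = 1 → uS (((v : ℕ) / 2 : ℕ) : ZMod k) = v := by
    intro v hv
    apply Fin.ext
    rw [huSval, ZMod.val_cast_of_lt (by have := v.isLt; omega : (v : ℕ) / 2 < k)]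
    have := v.isLt
    omega
  have hveven : ∀ v : Fin (2 * k), (v : ℕ) % 2 = 0 →
      uM ((((v : ℕ) / 2 + (k - 1)) : ℕ) : ZMod k) = v := by
    intro v hv
    apply Fin.ext
    rw [huMval, ZMod.val_natCast]
    have hvlt := v.isLt
    rcases Nat.eq_zero_or_pos (v : ℕ) with h0 | hpos
    · rw [h0]
      have e0 : (0 / 2 + (k - 1)) % k = k - 1 := by
        rw [Nat.mod_eq_of_lt (by omega)]
        omega
      rw [e0]
      have e : 2 * (k - 1) + 2 = 2 * k := by omega
      rw [e, Nat.mod_self]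
    · have e1 : ((v : ℕ) / 2 + (k - 1)) % k = (v : ℕ) / 2 - 1 := by
        have e2 : (v : ℕ) / 2 + (k - 1) = ((v : ℕ) / 2 - 1) + k := by omega
        rw [e2, Nat.add_mod_right, Nat.mod_eq_of_lt (by omega)]
      rw [e1]
      have e3 : 2 * ((v : ℕ) / 2 - 1) + 2 = (v : ℕ) := by omega
      rw [e3, Nat.mod_eq_of_lt hvlt]
  have hmem : ∀ v, φ v ∈ L v := by
    intro v
    by_cases hv : (v : ℕ) % 2 = 1
    · show (if _ then _ else _) ∈ _
      rw [if_pos hv]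
      have hmm := hxcmem (((v : ℕ) / 2 : ℕ) : ZMod k)
      rwa [hvodd v hv] at hmm
    · have hv0 : (v : ℕ) % 2 = 0 := by omega
      show (if _ then _ else _) ∈ _
      rw [if_neg hv]
      have hmm := hfmem ((((v : ℕ) / 2 + (k - 1)) : ℕ) : ZMod k)
      rwa [hveven v hv0] at hmm
  have hstep : ∀ u : Fin (2 * k),
      (φ u).1 ≠ (φ (u + 1)).1 ∧ dsgSign (φ u) (φ (u + 1)) = σ s(u, u + 1) := by
    intro u
    have hult := u.isLt
    have hu1val : (u + 1).1 = ((u : ℕ) + 1) % (2 * k) := by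
      rw [Fin.val_add, Fin.val_one']
      congr 1
      rw [Nat.mod_eq_of_lt (by omega)]
    by_cases hu : (u : ℕ) % 2 = 1
    · set i : ZMod k := (((u : ℕ) / 2 : ℕ) : ZMod k) with hi
      have hiv : i.val = (u : ℕ) / 2 := by
        rw [hi]; exact ZMod.val_cast_of_lt (by omega)
      have huS : uS i = u := hvodd u hu
      have hu1 : u + 1 = uM i := by
        apply Fin.ext
        rw [hu1val, huMval, hiv]
        congr 1
        omega
      have hφu : φ u = xc i := by
        show (if _ then _ else _) = _
        rw [if_pos hu]
      have hφu1 : φ (u + 1) = f i := by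
        rw [hu1]
        show (if _ then _ else _) = _
        rw [if_neg (by have := huMeven i; omega)]
        congr 1
        rw [huMval, hiv]
        rcases Nat.lt_or_ge (2 * ((u : ℕ) / 2) + 2) (2 * k) with hlt | hge
        · rw [Nat.mod_eq_of_lt hlt]
          have e4 : (2 * ((u : ℕ) / 2) + 2) / 2 + (k - 1) = (u : ℕ) / 2 + 1 + (k - 1) := by omega
          rw [e4]
          have e5 : (u : ℕ) / 2 + 1 + (k - 1) = (u : ℕ) / 2 + k := by omega
          rw [e5, Nat.cast_add, ZMod.natCast_self, add_zero, hi]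
        · have heq : 2 * ((u : ℕ) / 2) + 2 = 2 * k := by omega
          rw [heq, Nat.mod_self]
          have e6 : (0 : ℕ) / 2 + (k - 1) = k - 1 := by omega
          rw [e6]
          have e7 : i = ((k - 1 : ℕ) : ZMod k) := by
            rw [hi]
            congr 1
            omega
          rw [e7]
      refine ⟨?_, ?_⟩
      · rw [hφu, hφu1]
        exact fun h => hf3 i h.symm
      · rw [hφu, hφu1, hf5 i]
        show σ s(uS i, uM i) = σ s(u, u + 1)
        rw [huS, ← hu1]
    · have hu0 : (u : ℕ) % 2 = 0 := by omega
      set m : ZMod k := ((((u : ℕ) / 2 + (k - 1)) : ℕ) : ZMod k) with hm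
      have huM : uM m = u := hveven u hu0
      have hφu : φ u = f m := by
        show (if _ then _ else _) = _
        rw [if_neg (by omega)]
      have hm1 : m + 1 = (((u : ℕ) / 2 : ℕ) : ZMod k) := by
        rw [hm, Nat.cast_add, natCast_k_sub_one hk]
        ring
      have hu1 : u + 1 = uS (m + 1) := by
        apply Fin.ext
        rw [hu1val, huSval, hm1, ZMod.val_cast_of_lt (by omega : (u : ℕ) / 2 < k)]
        rw [Nat.mod_eq_of_lt (by omega)]
        omega
      have hφu1 : φ (u + 1) = xc (m + 1) := by
        rw [hu1]
        show (if _ then _ else _) = _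
        rw [if_pos (huSodd (m + 1))]
        congr 1
        rw [huSval]
        have e8 : (2 * (m + 1).val + 1) / 2 = (m + 1).val := by omega
        rw [e8]
        exact ZMod.natCast_rightInverse (m + 1)
      refine ⟨?_, ?_⟩
      · rw [hφu, hφu1]
        exact hf4 m
      · rw [hφu, hφu1, hf6 m]
        show σ s(uM m, uS (m + 1)) = σ s(u, u + 1)
        rw [huM, ← hu1]
  refine ⟨φ, hmem, ?_⟩
  intro u v huv
  rw [hadj u v] at huv
  rcases huv with h | h
  · have hu : u = v + 1 := by
      have h2 := eq_add_of_sub_eq h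
      rw [h2, add_comm]
    obtain ⟨h1, h2⟩ := hstep v
    subst hu
    refine ⟨fun hh => h1 hh.symm, ?_⟩
    rw [dsgSign_comm, h2, Sym2.eq_swap]
  · have hv : v = u + 1 := by
      have h2 := eq_add_of_sub_eq h
      rw [h2, add_comm]
    subst hv
    exact hstep u
end

section
/- Let (P,σ) be a signed path on vertices v, v_1, v_2 with edges v v_1 and v_1 v_2, and let L be a list assignment with L(v) = L(v_1) = C and L(v_2) a singleton. Then the set of colors c ∈ C for which there exists an L-coloring φ of (P,σ) with φ(v) = c is a paired set of size 10. -/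
open SimpleGraph

abbrev Spec (a b : ℤˣ) (c₂ c : ColorC) : Prop :=
  ∃ d : ColorC, d.1 ≠ c₂.1 ∧ dsgSign d c₂ = b ∧ c.1 ≠ d.1 ∧ dsgSign c d = a

set_option synthInstance.maxSize 2000 in
set_option maxHeartbeats 4000000 in
lemma key1 : ∀ (a b : ℤˣ) (c₂ c d : ColorC),
    (Spec a b c₂ c ∧ ¬ Spec a b c₂ (pairC c)) →
    (Spec a b c₂ d ∧ ¬ Spec a b c₂ (pairC d)) → c = d := by decide

set_option synthInstance.maxSize 2000 in
set_option maxHeartbeats 4000000 in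
lemma key2 : ∀ (a b : ℤˣ) (c₂ : ColorC),
    (Finset.univ.filter (Spec a b c₂)).card = 10 := by decide

lemma dsg_comm (c d : ColorC) : dsgSign c d = dsgSign d c := by
  simp [dsgSign, mul_comm, mul_left_comm, eq_comm]

lemma set_eq (σ : Sym2 (Fin 3) → ℤˣ) (c₂ : ColorC) :
    {c : ColorC |
        ∃ φ, IsLColoring (pathGraph 3) σ ![Set.univ, Set.univ, {c₂}] φ ∧ φ 0 = c}
      = {c | Spec (σ s(0, 1)) (σ s(1, 2)) c₂ c} := by
  have adj01 : (pathGraph 3).Adj 0 1 := by rw [pathGraph_adj]; left; rfl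
  have adj12 : (pathGraph 3).Adj 1 2 := by rw [pathGraph_adj]; left; rfl
  ext c
  simp only [Set.mem_setOf_eq]
  constructor
  · rintro ⟨φ, ⟨hmem, hadj⟩, rfl⟩
    have h2 : φ 2 = c₂ := hmem 2
    obtain ⟨h01, s01⟩ := hadj 0 1 adj01
    obtain ⟨h12, s12⟩ := hadj 1 2 adj12
    exact ⟨φ 1, by rw [← h2]; exact h12, by rw [← h2]; exact s12, h01, s01⟩
  · rintro ⟨d, hd1, hd2, hc1, hc2⟩
    refine ⟨![c, d, c₂], ⟨?_, ?_⟩, rfl⟩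
    · intro v; fin_cases v <;> simp
    · intro u v huv
      rw [pathGraph_adj] at huv
      fin_cases u <;> fin_cases v <;> simp_all <;>
        first
          | exact ⟨hc1, hc2⟩
          | exact ⟨fun h => hc1 h.symm, by rw [dsg_comm, Sym2.eq_swap]; exact hc2⟩
          | exact ⟨hd1, hd2⟩
          | exact ⟨fun h => hd1 h.symm, by rw [dsg_comm, Sym2.eq_swap]; exact hd2⟩

/-- Lemma 3.3: for a signed path `v v₁ v₂` (vertices `0, 1, 2` of `pathGraph 3`) with
`L(v) = L(v₁) = C` and `L(v₂)` a singleton, the set of admissible colors at `v` (the colors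
`c` for which some `L`-coloring assigns `c` to `v`) is a paired 10-set. -/
theorem admissible_path3_paired_ten (σ : Sym2 (Fin 3) → ℤˣ) (c₂ : ColorC) :
    IsPaired {c : ColorC |
        ∃ φ, IsLColoring (pathGraph 3) σ ![Set.univ, Set.univ, {c₂}] φ ∧ φ 0 = c} ∧
      {c : ColorC |
        ∃ φ, IsLColoring (pathGraph 3) σ ![Set.univ, Set.univ, {c₂}] φ ∧ φ 0 = c}.ncard = 10 := by
  rw [set_eq]
  constructor
  · intro x hx y hy
    exact key1 _ _ _ x y hx hy
  · rw [Set.ncard_eq_toFinset_card', Set.toFinset_setOf]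
    exact key2 _ _ _
end
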